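/- For any finite rooted tree t and any node u of t, if |θ_u t|/|t| < (1 + Φ(t))^{-1}, where Φ(t) = φ_t(root)/min_v φ_t(v) is the competitive ratio and θ_u t is the subtree rooted at u, then φ_t(u) > φ_t(root). -/
import Mathlib


open Finset
open scoped Classical

/-- A plane tree in the Ulam–Harris formalism: a finite set of words
containing the root, closed under parents, with children `u*0, …, u*(k-1)`. -/
def IsPlaneTree (t : Finset (List ℕ)) : Prop :=
  [] ∈ t ∧ (∀ u ∈ t, u ≠ [] → u.dropLast ∈ t) ∧
  (∀ u j k, u ++ [j] ∈ t → k ≤ j → u ++ [k] ∈ t)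

/-- `subSize t v` is the number of nodes of the subtree of `t` rooted at `v`. -/
noncomputable def subSize (t : Finset (List ℕ)) (v : List ℕ) : ℕ :=
  (t.filter (fun w => v <+: w)).card

/-- The centrality measure `φ_t(u)`. -/
noncomputable def phi (t : Finset (List ℕ)) (u : List ℕ) : ℝ :=
  (∏ v ∈ t.filter (fun v => ¬ v <+: u), (subSize t v : ℝ)) *
  (∏ v ∈ t.filter (fun v => v ≠ [] ∧ v <+: u), ((t.card : ℝ) - subSize t v))

/-- The competitive ratio `Φ(t) = φ_t(∅) / min_{u ∈ t} φ_t(u)`. -/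
noncomputable def PhiRatio (t : Finset (List ℕ)) : ℝ :=
  phi t [] / sInf (phi t '' ↑t)

lemma subSize_pos {t : Finset (List ℕ)} {v : List ℕ} (hv : v ∈ t) : 0 < subSize t v := by
  refine Finset.card_pos.mpr ⟨v, ?_⟩
  simp [Finset.mem_filter, hv, List.prefix_refl]

lemma subSize_lt {t : Finset (List ℕ)} (hroot : [] ∈ t) {v : List ℕ} (hv : v ≠ []) :
    subSize t v < t.card := by
  apply Finset.card_lt_card
  refine ⟨Finset.filter_subset _ _, fun hsub => ?_⟩
  have := hsub hroot
  simp only [Finset.mem_filter, List.prefix_nil] at this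
  exact hv this.2

lemma phi_pos {t : Finset (List ℕ)} (hroot : [] ∈ t) (u : List ℕ) : 0 < phi t u := by
  apply mul_pos
  · apply Finset.prod_pos
    intro v hv
    exact_mod_cast subSize_pos (Finset.mem_filter.mp hv).1
  · apply Finset.prod_pos
    intro v hv
    rw [Finset.mem_filter] at hv
    have h1 := subSize_lt hroot hv.2.1
    have h2 : (subSize t v : ℝ) < t.card := by exact_mod_cast h1
    linarith

lemma phi_key {t : Finset (List ℕ)} {u : List ℕ} (hu : u ∈ t) (hne : u ≠ []) :
    phi t u * subSize t u = ((t.card : ℝ) - subSize t u) * phi t u.dropLast := by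
  set p := u.dropLast with hp
  have hup : p ++ [u.getLast hne] = u := List.dropLast_append_getLast hne
  have hpref : ∀ v : List ℕ, v <+: u ↔ v <+: p ∨ v = u := by
    intro v
    constructor
    · intro hvu
      rw [← hup] at hvu
      rcases List.prefix_concat_iff.mp hvu with h1 | h1
      · right; rw [h1, hup]
      · left; exact h1
    · rintro (h1 | rfl)
      · exact h1.trans (hp ▸ List.dropLast_prefix u)
      · exact List.prefix_refl _
  have hnotup : ¬ u <+: p := by
    intro hcon
    have := hcon.length_le
    have hlen : u.length ≠ 0 := fun hl => hne (List.length_eq_zero_iff.mp hl)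
    have hlt : p.length < u.length := by
      rw [hp, List.length_dropLast]; omega
    omega
  have hA : t.filter (fun v => ¬ v <+: p) = insert u (t.filter (fun v => ¬ v <+: u)) := by
    ext v
    simp only [Finset.mem_filter, Finset.mem_insert]
    constructor
    · rintro ⟨hvt, hvp⟩
      by_cases hvu : v = u
      · exact Or.inl hvu
      · exact Or.inr ⟨hvt, fun hc => by rcases (hpref v).mp hc with h1 | h1 <;> [exact hvp h1; exact hvu h1]⟩
    · rintro (rfl | ⟨hvt, hvu⟩)
      · exact ⟨hu, hnotup⟩
      · exact ⟨hvt, fun hc => hvu ((hpref v).mpr (Or.inl hc))⟩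
  have hB : t.filter (fun v => v ≠ [] ∧ v <+: u)
      = insert u (t.filter (fun v => v ≠ [] ∧ v <+: p)) := by
    ext v
    simp only [Finset.mem_filter, Finset.mem_insert]
    constructor
    · rintro ⟨hvt, hvne, hvu⟩
      rcases (hpref v).mp hvu with h1 | h1
      · exact Or.inr ⟨hvt, hvne, h1⟩
      · exact Or.inl h1
    · rintro (rfl | ⟨hvt, hvne, hvp⟩)
      · exact ⟨hu, hne, List.prefix_refl _⟩
      · exact ⟨hvt, hvne, (hpref v).mpr (Or.inl hvp)⟩
  have hunA : u ∉ t.filter (fun v => ¬ v <+: u) := by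
    simp [Finset.mem_filter, List.prefix_refl]
  have hunB : u ∉ t.filter (fun v => v ≠ [] ∧ v <+: p) := by
    simp only [Finset.mem_filter]
    rintro ⟨-, -, hc⟩
    exact hnotup hc
  have eA : (∏ v ∈ t.filter (fun v => ¬ v <+: p), (subSize t v : ℝ))
      = (subSize t u : ℝ) * ∏ v ∈ t.filter (fun v => ¬ v <+: u), (subSize t v : ℝ) := by
    rw [hA, Finset.prod_insert hunA]
  have eB : (∏ v ∈ t.filter (fun v => v ≠ [] ∧ v <+: u), ((t.card : ℝ) - subSize t v))
      = ((t.card : ℝ) - subSize t u) *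
        ∏ v ∈ t.filter (fun v => v ≠ [] ∧ v <+: p), ((t.card : ℝ) - subSize t v) := by
    rw [hB, Finset.prod_insert hunB]
  unfold phi
  rw [eA, eB]
  ring

lemma subSize_root {t : Finset (List ℕ)} : subSize t [] = t.card := by
  unfold subSize
  rw [Finset.filter_true_of_mem]
  intro w _
  exact List.nil_prefix

theorem stmt0 (t : Finset (List ℕ)) (ht : IsPlaneTree t) (u : List ℕ) (hu : u ∈ t)
    (h : (subSize t u : ℝ) / t.card < (1 + PhiRatio t)⁻¹) :
    phi t u > phi t [] := by
  obtain ⟨hroot, hparent, -⟩ := ht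
  by_contra hcon
  push_neg at hcon
  have hn : (0:ℝ) < t.card := by exact_mod_cast Finset.card_pos.mpr ⟨[], hroot⟩
  set S := phi t '' ↑t with hS
  have hSfin : S.Finite := t.finite_toSet.image _
  have hSne : S.Nonempty := ⟨phi t [], Set.mem_image_of_mem _ (by exact_mod_cast hroot)⟩
  have hm_mem : sInf S ∈ S := hSne.csInf_mem hSfin
  have hm_pos : 0 < sInf S := by
    obtain ⟨w, _, hws⟩ := hm_mem
    rw [← hws]
    exact phi_pos hroot w
  have hm_le : ∀ v ∈ t, sInf S ≤ phi t v := fun v hv =>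
    csInf_le hSfin.bddBelow ⟨v, hv, rfl⟩
  have hPhi : PhiRatio t = phi t [] / sInf S := rfl
  have hPhipos : 0 < PhiRatio t := div_pos (phi_pos hroot []) hm_pos
  rcases eq_or_ne u [] with rfl | hne
  · rw [subSize_root, div_self hn.ne'] at h
    have h1 : (1 + PhiRatio t)⁻¹ ≤ 1 := by
      rw [inv_le_one_iff₀]
      right; linarith
    linarith
  · have hp := hparent u hu hne
    have key := phi_key hu hne
    have hsu : (0:ℝ) < subSize t u := by exact_mod_cast subSize_pos hu
    have h1 : phi t u ≤ PhiRatio t * sInf S := by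
      rw [hPhi, div_mul_cancel₀ _ hm_pos.ne']
      exact hcon
    have hml := hm_le u.dropLast hp
    have hppos := phi_pos hroot u.dropLast
    have h3 : ((t.card : ℝ) - subSize t u) * phi t u.dropLast
        ≤ PhiRatio t * subSize t u * phi t u.dropLast := by
      calc ((t.card : ℝ) - subSize t u) * phi t u.dropLast
          = phi t u * subSize t u := key.symm
        _ ≤ (PhiRatio t * sInf S) * subSize t u := by nlinarith
        _ ≤ PhiRatio t * subSize t u * phi t u.dropLast := by
            nlinarith [mul_le_mul_of_nonneg_left hml (mul_pos hPhipos hsu).le]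
    have h4 : (t.card : ℝ) - subSize t u ≤ PhiRatio t * subSize t u :=
      le_of_mul_le_mul_right h3 hppos
    rw [inv_eq_one_div, div_lt_div_iff₀ hn (by linarith)] at h
    nlinarith
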